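/- Let 𝒜 be irreducible with χ_p(𝒜) > 0 (p ≥ d−1). Suppose x* ≠ 0 in ℝ^d, F is a finite product of matrices from 𝒜, and ν > 0 satisfy ‖F x*‖ ≥ ν ‖x*‖. Then for every x ≠ 0 there exists a matrix L_x which is a product of at most p factors from 𝒜 ∪ {I} such that ‖F L_x x‖ ≥ ν · χ_p(𝒜) · ‖x‖, and the length of F L_x is between len(F) and len(F) + p. -/

import Mathlib

open Filter Set

/-- The set of all products of exactly `n` matrices from `𝒜`. -/
def prods {d : ℕ} (𝒜 : Set (Matrix (Fin d) (Fin d) ℝ)) (n : ℕ) :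
    Set (Matrix (Fin d) (Fin d) ℝ) :=
  {P | ∃ l : List (Matrix (Fin d) (Fin d) ℝ), l.length = n ∧ (∀ A ∈ l, A ∈ 𝒜) ∧ l.prod = P}

/-- `‖𝒜ⁿ‖`: the supremum of the norm `N` over all `n`-fold products from `𝒜`. -/
noncomputable def supN {d : ℕ} (N : Matrix (Fin d) (Fin d) ℝ → ℝ)
    (𝒜 : Set (Matrix (Fin d) (Fin d) ℝ)) (n : ℕ) : ℝ :=
  sSup (N '' prods 𝒜 n)

/-- The joint spectral radius of `𝒜` with respect to the matrix norm `N`,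
given by the generalized Gelfand formula. -/
noncomputable def jsr {d : ℕ} (N : Matrix (Fin d) (Fin d) ℝ → ℝ)
    (𝒜 : Set (Matrix (Fin d) (Fin d) ℝ)) : ℝ :=
  Filter.limsup (fun n : ℕ => (supN N 𝒜 n) ^ ((n : ℝ)⁻¹)) Filter.atTop

/-- A (matrix) norm: nonnegative, definite, absolutely homogeneous, subadditive. -/
def IsMatNorm {d : ℕ} (N : Matrix (Fin d) (Fin d) ℝ → ℝ) : Prop :=
  (∀ A, 0 ≤ N A) ∧ (∀ A, N A = 0 ↔ A = 0) ∧
  (∀ (c : ℝ) A, N (c • A) = |c| * N A) ∧ (∀ A B, N (A + B) ≤ N A + N B)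

/-- Products of at most `p` factors from `𝒜` (including the empty product `1`). -/
def prodsLe {d : ℕ} (𝒜 : Set (Matrix (Fin d) (Fin d) ℝ)) (p : ℕ) :
    Set (Matrix (Fin d) (Fin d) ℝ) :=
  ⋃ k ∈ Finset.range (p + 1), prods 𝒜 k

/-- A vector norm on `ℝ^d`: nonnegative, definite, absolutely homogeneous, subadditive. -/
def IsNorm {d : ℕ} (ν : (Fin d → ℝ) → ℝ) : Prop :=
  (∀ x, 0 ≤ ν x) ∧ (∀ x, ν x = 0 ↔ x = 0) ∧
  (∀ (a : ℝ) x, ν (a • x) = |a| * ν x) ∧ (∀ x y, ν (x + y) ≤ ν x + ν y)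

/-- Operator norm of a matrix induced by the vector norm `ν` on `ℝ^d`. -/
noncomputable def opNorm {d : ℕ} (ν : (Fin d → ℝ) → ℝ)
    (A : Matrix (Fin d) (Fin d) ℝ) : ℝ :=
  sSup ((fun x => ν (A.mulVec x)) '' {x | ν x = 1})

/-- `‖𝒜ⁿ‖` computed with the operator norm induced by `ν`. -/
noncomputable def supNu {d : ℕ} (ν : (Fin d → ℝ) → ℝ)
    (𝒜 : Set (Matrix (Fin d) (Fin d) ℝ)) (n : ℕ) : ℝ :=
  supN (opNorm ν) 𝒜 n

/-- The joint spectral radius computed with the operator norm induced by `ν`. -/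
noncomputable def jsrNu {d : ℕ} (ν : (Fin d → ℝ) → ℝ)
    (𝒜 : Set (Matrix (Fin d) (Fin d) ℝ)) : ℝ :=
  jsr (opNorm ν) 𝒜

/-- The `p`-measure of irreducibility (quasi-controllability) of `𝒜`
with respect to the vector norm `ν`:
`χ_p(𝒜) = inf_{ν x = 1} sup { t : S(t) ⊆ conv(𝒜_p(x) ∪ 𝒜_p(−x)) }`. -/
noncomputable def chi {d : ℕ} (ν : (Fin d → ℝ) → ℝ)
    (𝒜 : Set (Matrix (Fin d) (Fin d) ℝ)) (p : ℕ) : ℝ :=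
  sInf ((fun x => sSup {t : ℝ | 0 ≤ t ∧
      {y | ν y ≤ t} ⊆ convexHull ℝ
        (((fun A => A.mulVec x) '' prodsLe 𝒜 p) ∪
         ((fun A => A.mulVec (-x)) '' prodsLe 𝒜 p))}) '' {x | ν x = 1})

/-- `𝒜` is irreducible: the only common invariant subspaces are `⊥` and `⊤`. -/
def MatSetIrreducible {d : ℕ} (𝒜 : Set (Matrix (Fin d) (Fin d) ℝ)) : Prop :=
  ∀ L : Submodule ℝ (Fin d → ℝ), (∀ A ∈ 𝒜, ∀ x ∈ L, A.mulVec x ∈ L) → L = ⊥ ∨ L = ⊤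

lemma nu_sum_le {d : ℕ} {ν : (Fin d → ℝ) → ℝ} (hν : IsNorm ν)
    {ι : Type*} (t : Finset ι) (f : ι → Fin d → ℝ) :
    ν (∑ i ∈ t, f i) ≤ ∑ i ∈ t, ν (f i) := by
  classical
  induction t using Finset.induction_on with
  | empty => simp [(hν.2.1 0).2 rfl]
  | insert _ _ h ih =>
      rw [Finset.sum_insert h, Finset.sum_insert h]
      exact le_trans (hν.2.2.2 _ _) (by linarith)

lemma prods_finite {d : ℕ} (𝒜 : Finset (Matrix (Fin d) (Fin d) ℝ)) (n : ℕ) :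
    (prods (↑𝒜 : Set (Matrix (Fin d) (Fin d) ℝ)) n).Finite := by
  induction n with
  | zero =>
      apply Set.Finite.subset (Set.finite_singleton 1)
      rintro P ⟨l, hl, -, rfl⟩
      simp [List.length_eq_zero_iff.mp hl]
  | succ n ih =>
      apply Set.Finite.subset (Set.Finite.image2 (· * ·) 𝒜.finite_toSet ih)
      rintro P ⟨l, hl, hmem, rfl⟩
      cases l with
      | nil => simp at hl
      | cons A l' =>
          simp only [List.prod_cons]
          exact Set.mem_image2_of_mem (hmem A (by simp))
            ⟨l', by simpa using hl, fun B hB => hmem B (by simp [hB]), rfl⟩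

lemma prodsLe_finite {d : ℕ} (𝒜 : Finset (Matrix (Fin d) (Fin d) ℝ)) (p : ℕ) :
    (prodsLe (↑𝒜 : Set (Matrix (Fin d) (Fin d) ℝ)) p).Finite := by
  apply Set.Finite.biUnion (Finset.range (p + 1)).finite_toSet
  exact fun k _ => prods_finite 𝒜 k

lemma one_mem_prodsLe {d : ℕ} (𝒜 : Set (Matrix (Fin d) (Fin d) ℝ)) (p : ℕ) :
    (1 : Matrix (Fin d) (Fin d) ℝ) ∈ prodsLe 𝒜 p := by
  simp only [prodsLe, Set.mem_iUnion]
  exact ⟨0, by simp, [], rfl, by simp, rfl⟩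

/-- growth amplification lemma: if `‖F x*‖ ≥ c ‖x*‖` for a product `F`
of matrices from `𝒜`, then for every `x ≠ 0` there is a product `L_x` of at most `p`
factors from `𝒜 ∪ {I}` with `‖F L_x x‖ ≥ c χ_p(𝒜) ‖x‖`, and
`len F ≤ len (F L_x) ≤ len F + p`. -/
theorem statement10 {d : ℕ} (𝒜 : Finset (Matrix (Fin d) (Fin d) ℝ)) (h𝒜 : 𝒜.Nonempty)
    (ν : (Fin d → ℝ) → ℝ) (hν : IsNorm ν)
    (p : ℕ) (hp : d - 1 ≤ p)
    (hirr : MatSetIrreducible (↑𝒜 : Set (Matrix (Fin d) (Fin d) ℝ)))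
    (hchi : 0 < chi ν (↑𝒜 : Set (Matrix (Fin d) (Fin d) ℝ)) p)
    (xstar : Fin d → ℝ) (hxstar : xstar ≠ 0)
    (lF : List (Matrix (Fin d) (Fin d) ℝ)) (hlF : ∀ A ∈ lF, A ∈ 𝒜)
    (c : ℝ) (hc : 0 < c)
    (hF : c * ν xstar ≤ ν (lF.prod.mulVec xstar)) :
    ∀ x : Fin d → ℝ, x ≠ 0 →
      ∃ l : List (Matrix (Fin d) (Fin d) ℝ),
        (∀ A ∈ l, A ∈ 𝒜) ∧ l.length ≤ p ∧
        lF.length ≤ (lF ++ l).length ∧ (lF ++ l).length ≤ lF.length + p ∧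
        c * chi ν (↑𝒜 : Set (Matrix (Fin d) (Fin d) ℝ)) p * ν x ≤
          ν ((lF.prod * l.prod).mulVec x) := by
  classical
  obtain ⟨hν0, hνdef, hνsmul, hνadd⟩ := hν
  intro x hx
  set F := lF.prod with hFdef
  have hνx : 0 < ν x := lt_of_le_of_ne (hν0 x) (fun h => hx ((hνdef x).mp h.symm))
  have hνxs : 0 < ν xstar := lt_of_le_of_ne (hν0 xstar)
    (fun h => hxstar ((hνdef xstar).mp h.symm))
  set xh : Fin d → ℝ := (ν x)⁻¹ • x with hxh
  have hxh1 : ν xh = 1 := by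
    rw [hxh, hνsmul, abs_of_pos (inv_pos.mpr hνx), inv_mul_cancel₀ hνx.ne']
  set xsh : Fin d → ℝ := (ν xstar)⁻¹ • xstar with hxsh
  have hxsh1 : ν xsh = 1 := by
    rw [hxsh, hνsmul, abs_of_pos (inv_pos.mpr hνxs), inv_mul_cancel₀ hνxs.ne']
  set S : Set (Matrix (Fin d) (Fin d) ℝ) := prodsLe (↑𝒜) p with hS
  have hSfin : S.Finite := prodsLe_finite 𝒜 p
  have hSne : S.Nonempty := ⟨1, one_mem_prodsLe _ p⟩
  obtain ⟨P, hPS, hPmax⟩ :=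
    Set.exists_max_image S (fun Q => ν ((F * Q).mulVec xh)) hSfin hSne
  set M : ℝ := ν ((F * P).mulVec xh) with hM
  set C : Set (Fin d → ℝ) := convexHull ℝ
      (((fun A => A.mulVec xh) '' S) ∪ ((fun A => A.mulVec (-xh)) '' S)) with hC
  set T : Set ℝ := {t : ℝ | 0 ≤ t ∧ {y | ν y ≤ t} ⊆ C} with hT
  -- membership of the two basic points and 0 in C
  have hxhC : xh ∈ C := subset_convexHull ℝ _ (Or.inl ⟨1, one_mem_prodsLe _ p, Matrix.one_mulVec xh⟩)
  have hnxhC : -xh ∈ C := subset_convexHull ℝ _ (Or.inr ⟨1, one_mem_prodsLe _ p, Matrix.one_mulVec (-xh)⟩)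
  have h0C : (0 : Fin d → ℝ) ∈ C := by
    have := (convex_convexHull ℝ _) hxhC hnxhC (by norm_num : (0:ℝ) ≤ 1/2)
      (by norm_num : (0:ℝ) ≤ 1/2) (by norm_num)
    simpa using this
  have h0T : (0 : ℝ) ∈ T := by
    refine ⟨le_refl 0, fun y hy => ?_⟩
    have : y = 0 := (hνdef y).mp (le_antisymm hy (hν0 y))
    rw [this]; exact h0C
  -- key estimate: every u in T satisfies c * u ≤ M
  have key : ∀ u ∈ T, c * u ≤ M := by
    rintro u ⟨hu0, hu⟩
    have hyC : (u • xsh) ∈ C := hu (by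
      show ν (u • xsh) ≤ u
      rw [hνsmul, hxsh1, abs_of_nonneg hu0, mul_one])
    rw [hC, convexHull_eq] at hyC
    obtain ⟨ι, t, w, z, hw0, hw1, hzmem, hcm⟩ := hyC
    have hcm' : (u • xsh) = ∑ i ∈ t, w i • z i := by
      rw [← hcm, Finset.centerMass_eq_of_sum_1 t z hw1]
    have hFy : F.mulVec (u • xsh) = ∑ i ∈ t, w i • F.mulVec (z i) := by
      rw [hcm']
      simp only [← Matrix.mulVecLin_apply, map_sum, map_smul]
    have hzbound : ∀ i ∈ t, ν (F.mulVec (z i)) ≤ M := by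
      intro i hi
      rcases hzmem i hi with ⟨Q, hQ, hzQ⟩ | ⟨Q, hQ, hzQ⟩
      · rw [← hzQ]
        show ν (F.mulVec (Q.mulVec xh)) ≤ M
        simpa [Matrix.mulVec_mulVec] using hPmax Q hQ
      · rw [← hzQ]
        show ν (F.mulVec (Q.mulVec (-xh))) ≤ M
        have hneg : ∀ v : Fin d → ℝ, ν (-v) = ν v := by
          intro v
          have := hνsmul (-1) v
          simpa using this
        rw [Matrix.mulVec_neg, Matrix.mulVec_neg, hneg, Matrix.mulVec_mulVec]
        exact hPmax Q hQ
    have hupper : ν (F.mulVec (u • xsh)) ≤ M := by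
      rw [hFy]
      calc ν (∑ i ∈ t, w i • F.mulVec (z i))
          ≤ ∑ i ∈ t, ν (w i • F.mulVec (z i)) :=
            nu_sum_le ⟨hν0, hνdef, hνsmul, hνadd⟩ t _
        _ ≤ ∑ i ∈ t, w i * M := by
            apply Finset.sum_le_sum
            intro i hi
            rw [hνsmul, abs_of_nonneg (hw0 i hi)]
            exact mul_le_mul_of_nonneg_left (hzbound i hi) (hw0 i hi)
        _ = M := by rw [← Finset.sum_mul, hw1, one_mul]
    have hlower : c * u ≤ ν (F.mulVec (u • xsh)) := by
      rw [Matrix.mulVec_smul, hνsmul, abs_of_nonneg hu0, hxsh,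
        Matrix.mulVec_smul, hνsmul, abs_of_pos (inv_pos.mpr hνxs)]
      have : c ≤ (ν xstar)⁻¹ * ν (F.mulVec xstar) := by
        rw [le_inv_mul_iff₀ hνxs]
        linarith [hF]
      calc c * u = u * c := mul_comm c u
        _ ≤ u * ((ν xstar)⁻¹ * ν (F.mulVec xstar)) :=
            mul_le_mul_of_nonneg_left this hu0
    exact le_trans hlower hupper
  -- chi ≤ sSup T ≤ M / c
  have hchile : chi ν (↑𝒜) p ≤ sSup T := by
    apply csInf_le
    · refine ⟨0, ?_⟩
      rintro v ⟨y, hy, rfl⟩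
      exact Real.sSup_nonneg (fun t ht => ht.1)
    · exact ⟨xh, hxh1, rfl⟩
  have hsuple : sSup T ≤ M / c := by
    apply csSup_le ⟨0, h0T⟩
    intro u hu
    rw [le_div_iff₀ hc]
    calc u * c = c * u := mul_comm u c
      _ ≤ M := key u hu
  have hchiM : c * chi ν (↑𝒜) p ≤ M := by
    have : chi ν (↑𝒜) p ≤ M / c := le_trans hchile hsuple
    calc c * chi ν (↑𝒜) p ≤ c * (M / c) := mul_le_mul_of_nonneg_left this hc.le
      _ = M := by field_simp
  -- unpack P
  obtain ⟨k, hk, l, hlen, hlmem, hlprod⟩ : ∃ k, k ∈ Finset.range (p + 1) ∧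
      ∃ l : List (Matrix (Fin d) (Fin d) ℝ), l.length = k ∧ (∀ A ∈ l, A ∈ (↑𝒜 : Set _)) ∧ l.prod = P := by
    rcases Set.mem_iUnion.mp hPS with ⟨k, hk⟩
    rcases Set.mem_iUnion.mp hk with ⟨hkr, ⟨l, h1, h2, h3⟩⟩
    exact ⟨k, hkr, l, h1, h2, h3⟩
  have hklep : k ≤ p := by
    have := Finset.mem_range.mp hk; omega
  refine ⟨l, fun A hA => hlmem A hA, by omega, by simp, by simp; omega, ?_⟩
  have hMx : M * ν x = ν ((F * P).mulVec x) := by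
    have : (F * P).mulVec xh = (ν x)⁻¹ • (F * P).mulVec x := by
      rw [hxh, Matrix.mulVec_smul]
    rw [hM, this, hνsmul, abs_of_pos (inv_pos.mpr hνx)]
    field_simp
  rw [hlprod]
  calc c * chi ν (↑𝒜) p * ν x ≤ M * ν x :=
        mul_le_mul_of_nonneg_right hchiM hνx.le
    _ = ν ((F * P).mulVec x) := hMx
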